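/- Let K be a pathwise connected poset whose fundamental group π₁ᵒ(K) is amenable. Then every nondegenerate net of C*-algebras over K has a state. -/

import Mathlib

noncomputable section

universe u v w u' v' w' u'' v'' w''

namespace AQFT

/-! ### Simplices and paths in a poset -/

structure Simplex1 (K : Type u) [PartialOrder K] : Type u where
  supp : K
  d0 : K
  d1 : K
  le0 : d0 ≤ supp
  le1 : d1 ≤ supp

namespace Simplex1

variable {K : Type u} [PartialOrder K]

def op (s : Simplex1 K) : Simplex1 K := ⟨s.supp, s.d1, s.d0, s.le1, s.le0⟩

def deg (a : K) : Simplex1 K := ⟨a, a, a, le_rfl, le_rfl⟩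

def map {L : Type u'} [PartialOrder L] (f : K →o L) (s : Simplex1 K) : Simplex1 L :=
  ⟨f s.supp, f s.d0, f s.d1, f.monotone s.le0, f.monotone s.le1⟩

end Simplex1

structure Simplex2 (K : Type u) [PartialOrder K] : Type u where
  supp : K
  d0 : Simplex1 K
  d1 : Simplex1 K
  d2 : Simplex1 K
  le0 : d0.supp ≤ supp
  le1 : d1.supp ≤ supp
  le2 : d2.supp ≤ supp
  h00 : d0.d0 = d1.d0
  h11 : d1.d1 = d2.d1
  h10 : d0.d1 = d2.d0

inductive SPath (K : Type u) [PartialOrder K] : K → K → Type u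
  | nil (a : K) : SPath K a a
  | cons {a b c : K} (p : SPath K a b) (s : Simplex1 K) (h1 : s.d1 = b) (h0 : s.d0 = c) :
      SPath K a c

namespace SPath

variable {K : Type u} [PartialOrder K]

/-- The path consisting of a single 1-simplex. -/
def single {a b : K} (s : Simplex1 K) (h1 : s.d1 = a) (h0 : s.d0 = b) : SPath K a b :=
  .cons (.nil a) s h1 h0

/-- Composition of paths: first traverse `p`, then `q`. -/
def comp {a b : K} (p : SPath K a b) : {c : K} → SPath K b c → SPath K a c
  | _, .nil _ => p
  | _, .cons q s h1 h0 => .cons (p.comp q) s h1 h0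

/-- The opposite (reverse) of a path. -/
def reverse {a : K} : {b : K} → SPath K a b → SPath K b a
  | _, .nil _ => .nil a
  | _, .cons p s h1 h0 => (single s.op h0 h1).comp p.reverse

@[simp] theorem comp_nil {a b : K} (p : SPath K a b) : p.comp (.nil b) = p := rfl

@[simp] theorem nil_comp {a b : K} (p : SPath K a b) : (SPath.nil a).comp p = p := by
  induction p with
  | nil => rfl
  | cons p s h1 h0 ih =>
      show SPath.cons ((SPath.nil _).comp p) s h1 h0 = _
      rw [ih]

theorem comp_assoc {a b c d : K} (p : SPath K a b) (q : SPath K b c) (r : SPath K c d) :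
    (p.comp q).comp r = p.comp (q.comp r) := by
  induction r with
  | nil => rfl
  | cons r s h1 h0 ih =>
      show SPath.cons ((p.comp q).comp r) s h1 h0 = SPath.cons (p.comp (q.comp r)) s h1 h0
      rw [ih]

/-- All 1-simplices of the path have support `≤ o`. -/
def SuppLE (o : K) {a : K} : {b : K} → SPath K a b → Prop
  | _, .nil _ => True
  | _, .cons p s _ _ => SuppLE o p ∧ s.supp ≤ o

/-- All supports and faces of the path belong to `P`. -/
def MemAll (P : Set K) {a : K} : {b : K} → SPath K a b → Prop
  | _, .nil _ => True
  | _, .cons p s _ _ => MemAll P p ∧ s.supp ∈ P ∧ s.d0 ∈ P ∧ s.d1 ∈ P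

theorem SuppLE.comp {o : K} {a b c : K} {p : SPath K a b} {q : SPath K b c}
    (hp : SuppLE o p) (hq : SuppLE o q) : SuppLE o (p.comp q) := by
  induction q with
  | nil => exact hp
  | cons q s h1 h0 ih => exact ⟨ih hq.1, hq.2⟩

theorem SuppLE.reverse {o : K} {a b : K} {p : SPath K a b} (hp : SuppLE o p) :
    SuppLE o p.reverse := by
  induction p with
  | nil => trivial
  | cons p s h1 h0 ih => exact SuppLE.comp ⟨trivial, hp.2⟩ (ih hp.1)

/-- Mapping paths along a monotone map. -/
def map {L : Type u'} [PartialOrder L] (f : K →o L) {a : K} :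
    {b : K} → SPath K a b → SPath L (f a) (f b)
  | _, .nil _ => .nil (f a)
  | _, .cons p s h1 h0 => .cons (map f p) (s.map f) (congrArg f h1) (congrArg f h0)

/-- The path of the nerve 1-simplex associated with an inclusion `o ≤ a`. -/
def nervePath {o a : K} (h : o ≤ a) : SPath K o a :=
  single ⟨a, a, o, le_rfl, h⟩ rfl rfl

/-! ### Homotopy of paths -/

inductive Homotopic : {a b : K} → SPath K a b → SPath K a b → Prop
  | refl {a b : K} (p : SPath K a b) : Homotopic p p
  | symm {a b : K} {p q : SPath K a b} : Homotopic p q → Homotopic q p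
  | trans {a b : K} {p q r : SPath K a b} : Homotopic p q → Homotopic q r → Homotopic p r
  | comp_congr {a b c : K} {p p' : SPath K a b} {q q' : SPath K b c} :
      Homotopic p p' → Homotopic q q' → Homotopic (p.comp q) (p'.comp q')
  | degen {a : K} (s : Simplex1 K) (h0 : s.d0 = a) (h1 : s.d1 = a) (hs : s.supp = a) :
      Homotopic (SPath.nil a) (single s h1 h0)
  | triangle {a b : K} (c : Simplex2 K) (h1 : c.d2.d1 = a) (h0 : c.d0.d0 = b) :
      Homotopic ((single c.d2 h1 rfl).comp (single c.d0 c.h10 h0))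
        (single c.d1 (c.h11.trans h1) (c.h00.symm.trans h0))

theorem single_comp_op {a b : K} (s : Simplex1 K) (h1 : s.d1 = a) (h0 : s.d0 = b) :
    Homotopic ((single s h1 h0).comp (single s.op h0 h1)) (SPath.nil a) := by
  subst h1; subst h0
  have ht := Homotopic.triangle
    (⟨s.supp, s.op, Simplex1.deg s.d1, s, le_rfl, s.le1, le_rfl, rfl, rfl, rfl⟩ : Simplex2 K)
    rfl rfl
  have hd := Homotopic.degen (K := K) (Simplex1.deg s.d1) rfl rfl rfl
  exact ht.trans hd.symm

theorem comp_reverse_self {a b : K} (p : SPath K a b) :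
    Homotopic (p.comp p.reverse) (SPath.nil a) := by
  induction p with
  | nil => exact .refl _
  | cons p s h1 h0 ih =>
      show Homotopic ((p.comp (single s h1 h0)).comp ((single s.op h0 h1).comp p.reverse)) _
      rw [comp_assoc, ← comp_assoc (single s h1 h0)]
      have h2 : Homotopic (((single s h1 h0).comp (single s.op h0 h1)).comp p.reverse)
          p.reverse := by
        have h3 := Homotopic.comp_congr (single_comp_op s h1 h0) (Homotopic.refl p.reverse)
        rwa [nil_comp] at h3
      exact (Homotopic.comp_congr (Homotopic.refl p) h2).trans ih

theorem reverse_comp_self {a b : K} (p : SPath K a b) :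
    Homotopic (p.reverse.comp p) (SPath.nil b) := by
  induction p with
  | nil => exact .refl _
  | cons p s h1 h0 ih =>
      show Homotopic (((single s.op h0 h1).comp p.reverse).comp (p.comp (single s h1 h0))) _
      rw [comp_assoc, ← comp_assoc p.reverse]
      have h2 : Homotopic ((p.reverse.comp p).comp (single s h1 h0)) (single s h1 h0) := by
        have h3 := Homotopic.comp_congr ih (Homotopic.refl (single s h1 h0))
        rwa [nil_comp] at h3
      have h4 : Homotopic ((single s.op h0 h1).comp ((p.reverse.comp p).comp (single s h1 h0)))
          ((single s.op h0 h1).comp (single s h1 h0)) :=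
        Homotopic.comp_congr (Homotopic.refl _) h2
      exact h4.trans (single_comp_op s.op h0 h1)

theorem Homotopic.reverse_congr {a b : K} {p q : SPath K a b} (h : Homotopic p q) :
    Homotopic p.reverse q.reverse := by
  have e1 : Homotopic p.reverse (p.reverse.comp (q.comp q.reverse)) :=
    Homotopic.comp_congr (Homotopic.refl p.reverse) (comp_reverse_self q).symm
  have e2 : Homotopic (p.reverse.comp (q.comp q.reverse)) ((p.reverse.comp p).comp q.reverse) := by
    rw [comp_assoc]
    exact Homotopic.comp_congr (Homotopic.refl _)
      (Homotopic.comp_congr h.symm (Homotopic.refl _))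
  have e3 : Homotopic ((p.reverse.comp p).comp q.reverse) q.reverse := by
    have h3 := Homotopic.comp_congr (reverse_comp_self p) (Homotopic.refl q.reverse)
    rwa [nil_comp] at h3
  exact (e1.trans e2).trans e3

end SPath

/-! ### The fundamental group of a poset -/

instance homotopySetoid (K : Type u) [PartialOrder K] (o : K) : Setoid (SPath K o o) where
  r := SPath.Homotopic
  iseqv := ⟨fun p => .refl p, fun h => h.symm, fun h h' => h.trans h'⟩

def Pi1 (K : Type u) [PartialOrder K] (o : K) : Type u := Quotient (homotopySetoid K o)

namespace Pi1

variable {K : Type u} [PartialOrder K] {o : K}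

def mk (p : SPath K o o) : Pi1 K o := Quotient.mk _ p

instance : One (Pi1 K o) := ⟨mk (SPath.nil o)⟩

instance : Mul (Pi1 K o) :=
  ⟨Quotient.map₂ (fun p q => q.comp p)
    (fun _ _ hp _ _ hq => SPath.Homotopic.comp_congr hq hp)⟩

instance : Inv (Pi1 K o) :=
  ⟨Quotient.map SPath.reverse (fun _ _ h => h.reverse_congr)⟩

instance : Group (Pi1 K o) where
  mul_assoc x y z := by
    refine Quotient.inductionOn₃ x y z ?_
    intro p q r
    show mk (r.comp (q.comp p)) = mk ((r.comp q).comp p)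
    rw [SPath.comp_assoc]
  one_mul x := Quotient.inductionOn x fun p => rfl
  mul_one x := Quotient.inductionOn x fun p => congrArg mk (SPath.nil_comp p)
  inv_mul_cancel x := Quotient.inductionOn x fun p => Quotient.sound (SPath.comp_reverse_self p)

end Pi1

/-! ### Nets of C*-algebras over a poset -/

open scoped ComplexOrder

variable {K : Type u} [PartialOrder K]

structure CStarNet (K : Type u) [PartialOrder K] where
  fib : K → Type v
  [cstar : ∀ o, CStarAlgebra (fib o)]
  incl : ∀ ⦃a o : K⦄, a ≤ o → (fib a →⋆ₐ[ℂ] fib o)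
  incl_injective : ∀ ⦃a o : K⦄ (h : a ≤ o), Function.Injective (incl h)
  incl_comp : ∀ ⦃e a o : K⦄ (h1 : e ≤ a) (h2 : a ≤ o) (x : fib e),
      incl h2 (incl h1 x) = incl (h1.trans h2) x

attribute [instance] CStarNet.cstar

/-- A C*-net bundle: all the inclusion maps are isomorphisms. -/
def IsCStarNetBundle (N : CStarNet.{u, v} K) : Prop :=
  ∀ ⦃a o : K⦄ (h : a ≤ o), Function.Bijective (N.incl h)

/-- Morphisms of nets over (possibly) different posets, over the poset map `f`. -/
def IsNetMorphism {K : Type u} {S : Type u'} [PartialOrder K] [PartialOrder S]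
    (N : CStarNet.{u, v} K) (M : CStarNet.{u', v'} S) (f : K →o S)
    (φ : ∀ o : K, N.fib o →⋆ₐ[ℂ] M.fib (f o)) : Prop :=
  ∀ ⦃a o : K⦄ (h : a ≤ o) (x : N.fib a), φ o (N.incl h x) = M.incl (f.monotone h) (φ a x)

/-- Morphisms of nets over the same poset (over the identity of the poset). -/
def IsNetMorphismOver (N : CStarNet.{u, v} K) (M : CStarNet.{u, v'} K)
    (φ : ∀ o : K, N.fib o →⋆ₐ[ℂ] M.fib o) : Prop :=
  ∀ ⦃a o : K⦄ (h : a ≤ o) (x : N.fib a), φ o (N.incl h x) = M.incl h (φ a x)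

namespace CStarNet

def fibCast (N : CStarNet.{u, v} K) {a b : K} (h : a = b) : N.fib a ≃⋆ₐ[ℂ] N.fib b := by
  subst h; exact StarAlgEquiv.refl ℂ _

/-- The isomorphism determined by an inclusion map of a C*-net bundle. -/
def holEquiv (N : CStarNet.{u, v} K) (hN : IsCStarNetBundle N) ⦃a o : K⦄ (h : a ≤ o) :
    N.fib a ≃⋆ₐ[ℂ] N.fib o :=
  StarAlgEquiv.ofBijective (N.incl h) (hN h)

/-- The 1-cocycle `j_b` associated with a 1-simplex `b` of the poset. -/
def hol1 (N : CStarNet.{u, v} K) (hN : IsCStarNetBundle N) (s : Simplex1 K) :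
    N.fib s.d1 ≃⋆ₐ[ℂ] N.fib s.d0 :=
  (N.holEquiv hN s.le1).trans (N.holEquiv hN s.le0).symm

/-- The extension `j_p` of the 1-cocycle from 1-simplices to paths. -/
def holPath (N : CStarNet.{u, v} K) (hN : IsCStarNetBundle N) {a : K} :
    {b : K} → SPath K a b → (N.fib a ≃⋆ₐ[ℂ] N.fib b)
  | _, .nil _ => StarAlgEquiv.refl ℂ _
  | _, .cons p s h1 h0 =>
      (holPath N hN p).trans (((N.fibCast h1.symm).trans (N.hol1 hN s)).trans (N.fibCast h0))

end CStarNet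

/-- A net is trivial if it is isomorphic to a constant net bundle. -/
def IsTrivialNet (N : CStarNet.{u, v} K) : Prop :=
  ∀ o₀ : K, ∃ τ : ∀ a, N.fib a ≃⋆ₐ[ℂ] N.fib o₀,
    ∀ ⦃a o : K⦄ (h : a ≤ o) (x : N.fib a), τ o (N.incl h x) = τ a x

/-- `(NB, ε)` is an enveloping net bundle of the net `N`. -/
def IsEnvelope (N : CStarNet.{u, v} K) (NB : CStarNet.{u, max u v} K)
    (ε : ∀ o, N.fib o →⋆ₐ[ℂ] NB.fib o) : Prop :=
  IsCStarNetBundle NB ∧ IsNetMorphismOver N NB ε ∧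
    ∀ (M : CStarNet.{u, max u v} K), IsCStarNetBundle M →
      ∀ ψ : ∀ o, N.fib o →⋆ₐ[ℂ] M.fib o, IsNetMorphismOver N M ψ →
        ∃! ψu : ∀ o, NB.fib o →⋆ₐ[ℂ] M.fib o,
          IsNetMorphismOver NB M ψu ∧ ∀ o x, ψu o (ε o x) = ψ o x

/-- The net `N` is nondegenerate w.r.t. the enveloping net bundle `NB`. -/
def IsNondegenerate (NB : CStarNet.{u, v'} K) : Prop :=
  ∀ o : K, Nontrivial (NB.fib o)

/-! ### States -/

/-- A state on a unital C*-algebra. -/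
structure CStarAlgState (A : Type v) [CStarAlgebra A] where
  lin : A →ₗ[ℂ] ℂ
  map_one : lin 1 = 1
  pos : ∀ a : A, 0 ≤ lin (star a * a)

/-- A state on a net of C*-algebras. -/
structure NetState (N : CStarNet.{u, v} K) where
  st : ∀ o, CStarAlgState (N.fib o)
  compat : ∀ ⦃o a : K⦄ (h : o ≤ a) (x : N.fib o), (st a).lin (N.incl h x) = (st o).lin x

/-! ### Representations -/

structure NetRep (N : CStarNet.{u, v} K) where
  H : K → Type w
  [nacg : ∀ o, NormedAddCommGroup (H o)]
  [ips : ∀ o, InnerProductSpace ℂ (H o)]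
  [cpl : ∀ o, CompleteSpace (H o)]
  rep : ∀ o, N.fib o →⋆ₐ[ℂ] (H o →L[ℂ] H o)
  U : ∀ ⦃o a : K⦄, o ≤ a → (H o ≃ₗᵢ[ℂ] H a)
  intertwine : ∀ ⦃o a : K⦄ (h : o ≤ a) (x : N.fib o) (v : H o),
      U h (rep o x v) = rep a (N.incl h x) (U h v)
  U_comp : ∀ ⦃o a e : K⦄ (h1 : o ≤ a) (h2 : a ≤ e) (v : H o),
      U h2 (U h1 v) = U (h1.trans h2) v

attribute [instance] NetRep.nacg NetRep.ips NetRep.cpl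

namespace NetRep

variable {N : CStarNet.{u, v} K}

def hCast (R : NetRep.{u, v, w} N) {a b : K} (h : a = b) : R.H a ≃ₗᵢ[ℂ] R.H b := by
  subst h; exact LinearIsometryEquiv.refl ℂ _

/-- The unitary `U_b` associated with a 1-simplex `b`. -/
def U1 (R : NetRep.{u, v, w} N) (s : Simplex1 K) : R.H s.d1 ≃ₗᵢ[ℂ] R.H s.d0 :=
  (R.U s.le1).trans (R.U s.le0).symm

/-- The unitary `U_p` associated with a path `p`. -/
def Upath (R : NetRep.{u, v, w} N) {a : K} : {b : K} → SPath K a b → (R.H a ≃ₗᵢ[ℂ] R.H b)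
  | _, .nil _ => LinearIsometryEquiv.refl ℂ _
  | _, .cons p s h1 h0 =>
      (Upath R p).trans (((R.hCast h1.symm).trans (R.U1 s)).trans (R.hCast h0))

/-- A representation is faithful if all the `π_o` are injective. -/
def Faithful (R : NetRep.{u, v, w} N) : Prop := ∀ o, Function.Injective (R.rep o)

/-- A representation vanishes if all the `π_o` are zero. -/
def Vanishes (R : NetRep.{u, v, w} N) : Prop := ∀ (o) (x : N.fib o), R.rep o x = 0

/-- Quasi (topologically) trivial representation: the loop unitaries commute with the
representation of the corresponding fibre. -/
def QuasiTrivial (R : NetRep.{u, v, w} N) : Prop :=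
  ∀ (o : K) (p : SPath K o o) (x : N.fib o) (v : R.H o),
    R.Upath p (R.rep o x v) = R.rep o x (R.Upath p v)

/-- Unitary equivalence of representations. -/
def Equiv (R : NetRep.{u, v, w} N) (R' : NetRep.{u, v, w'} N) : Prop :=
  ∃ T : ∀ o, R.H o ≃ₗᵢ[ℂ] R'.H o,
    (∀ (o) (x : N.fib o) (v : R.H o), T o (R.rep o x v) = R'.rep o x (T o v)) ∧
    (∀ ⦃o a : K⦄ (h : o ≤ a) (v : R.H o), T a (R.U h v) = R'.U h (T o v))

end NetRep

/-- The representation of `N` obtained by composing a representation of `NB` with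
a morphism `ε : N → NB` of nets over `K`. -/
def NetRep.ofEnvelope {N : CStarNet.{u, v} K} {NB : CStarNet.{u, v'} K}
    (ε : ∀ o, N.fib o →⋆ₐ[ℂ] NB.fib o) (hε : IsNetMorphismOver N NB ε)
    (R : NetRep.{u, v', w} NB) : NetRep.{u, v, w} N where
  H := R.H
  rep o := (R.rep o).comp (ε o)
  U := R.U
  intertwine := by
    intro o a h x v
    show R.U h (R.rep o (ε o x) v) = R.rep a (ε a (N.incl h x)) (R.U h v)
    rw [hε h x]
    exact R.intertwine h (ε o x) v
  U_comp := R.U_comp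

/-- Covariant representations of the holonomy dynamical system of a C*-net bundle,
with the action of the fundamental group presented at the level of loops. -/
structure CovRep (N : CStarNet.{u, v} K) (hN : IsCStarNetBundle N) (o : K) where
  H : Type w
  [nacg : NormedAddCommGroup H]
  [ips : InnerProductSpace ℂ H]
  [cpl : CompleteSpace H]
  eta : N.fib o →⋆ₐ[ℂ] (H →L[ℂ] H)
  V : SPath K o o → (H ≃ₗᵢ[ℂ] H)
  V_hom : ∀ p q : SPath K o o, SPath.Homotopic p q → V p = V q
  V_mul : ∀ p q : SPath K o o, V (p.comp q) = (V p).trans (V q)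
  cov : ∀ (p : SPath K o o) (x : N.fib o) (v : H),
      eta (N.holPath hN p x) (V p v) = V p (eta x v)

attribute [instance] CovRep.nacg CovRep.ips CovRep.cpl

/-- Equivalence of covariant representations. -/
def CovRep.Equiv {N : CStarNet.{u, v} K} {hN : IsCStarNetBundle N} {o : K}
    (C : CovRep.{u, v, w} N hN o) (C' : CovRep.{u, v, w'} N hN o) : Prop :=
  ∃ W : C.H ≃ₗᵢ[ℂ] C'.H,
    (∀ (x : N.fib o) (v : C.H), W (C.eta x v) = C'.eta x (W v)) ∧
    (∀ (p : SPath K o o) (v : C.H), W (C.V p v) = C'.V p (W v))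

/-- A representation of a single C*-algebra on a Hilbert space. -/
structure AlgRep (A : Type v) [CStarAlgebra A] where
  H : Type w
  [nacg : NormedAddCommGroup H]
  [ips : InnerProductSpace ℂ H]
  [cpl : CompleteSpace H]
  rho : A →⋆ₐ[ℂ] (H →L[ℂ] H)

attribute [instance] AlgRep.nacg AlgRep.ips AlgRep.cpl

/-- A Hilbert space representation (on a single Hilbert space) of the restriction of
a net of C*-algebras to a subset `P` of the poset. -/
structure SubNetHSRep (N : CStarNet.{u, v} K) (P : Set K) where
  H : Type w
  [nacg : NormedAddCommGroup H]
  [ips : InnerProductSpace ℂ H]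
  [cpl : CompleteSpace H]
  rep : ∀ o ∈ P, N.fib o →⋆ₐ[ℂ] (H →L[ℂ] H)
  compat : ∀ ⦃a o : K⦄ (ha : a ∈ P) (ho : o ∈ P) (h : a ≤ o) (x : N.fib a),
      rep o ho (N.incl h x) = rep a ha x

attribute [instance] SubNetHSRep.nacg SubNetHSRep.ips SubNetHSRep.cpl

/-! ### Amenability -/

/-- The space `ℓ∞(G)` of bounded real-valued functions on `G`. -/
def BddFuns (G : Type w) : Submodule ℝ (G → ℝ) where
  carrier := {f | ∃ C, ∀ g, |f g| ≤ C}
  add_mem' := by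
    rintro f g ⟨C, hC⟩ ⟨D, hD⟩
    exact ⟨C + D, fun x => (abs_add_le _ _).trans (add_le_add (hC x) (hD x))⟩
  zero_mem' := ⟨0, by simp⟩
  smul_mem' := by
    rintro c f ⟨C, hC⟩
    refine ⟨|c| * C, fun x => ?_⟩
    have : |c • f x| = |c| * |f x| := by simp [abs_mul]
    calc |(c • f) x| = |c| * |f x| := by simpa using this
      _ ≤ |c| * C := mul_le_mul_of_nonneg_left (hC x) (abs_nonneg c)

def BddFuns.const (G : Type w) (r : ℝ) : BddFuns G :=
  ⟨fun _ => r, ⟨|r|, fun _ => le_rfl⟩⟩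

def BddFuns.rtrans {G : Type w} [Group G] (f : BddFuns G) (h : G) : BddFuns G :=
  ⟨fun g => (f : G → ℝ) (g * h), by
    obtain ⟨C, hC⟩ := f.2
    exact ⟨C, fun g => hC (g * h)⟩⟩

/-- A right invariant mean on `ℓ∞(G)`. -/
structure RightInvariantMean (G : Type w) [Group G] where
  mean : BddFuns G →ₗ[ℝ] ℝ
  nonneg : ∀ f : BddFuns G, (∀ g, 0 ≤ (f : G → ℝ) g) → 0 ≤ mean f
  normalized : mean (BddFuns.const G 1) = 1
  rightInv : ∀ (f : BddFuns G) (h : G), mean (BddFuns.rtrans f h) = mean f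

/-- Amenability of a (discrete) group. -/
def IsAmenable (G : Type w) [Group G] : Prop := Nonempty (RightInvariantMean G)

/-! ### Covariant nets -/

/-- A `G`-covariant structure on a net of C*-algebras, where `G` acts on the poset `K`
by order preserving bijections. -/
structure CovariantNet {G : Type w} [Group G] [MulAction G K]
    (hord : ∀ (g : G) (a b : K), a ≤ b → g • a ≤ g • b) (N : CStarNet.{u, v} K) where
  act : ∀ (g : G) (o : K), N.fib o ≃⋆ₐ[ℂ] N.fib (g • o)
  act_mul : ∀ (g h : G) (o : K) (x : N.fib o),
      N.fibCast (mul_smul h g o) (act (h * g) o x) = act h (g • o) (act g o x)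
  act_incl : ∀ (g : G) ⦃a o : K⦄ (hao : a ≤ o) (x : N.fib a),
      act g o (N.incl hao x) = N.incl (hord g a o hao) (act g a x)

/-- A `G`-invariant state of a `G`-covariant net. -/
def NetState.Invariant {G : Type w} [Group G] [MulAction G K]
    {hord : ∀ (g : G) (a b : K), a ≤ b → g • a ≤ g • b} {N : CStarNet.{u, v} K}
    (α : CovariantNet hord N) (ω : NetState N) : Prop :=
  ∀ (g : G) (o : K) (x : N.fib o), (ω.st (g • o)).lin (α.act g o x) = (ω.st o).lin x

/-! ### The generalized Čech cocycle -/

/-- A 1-simplex of the simplicial set `Σ°_*(K)`: two vertices and a nonempty support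
`F` lying below both of them. -/
structure CechSimplex1 (K : Type u) [PartialOrder K] : Type u where
  F : Set K
  hne : F.Nonempty
  src : K
  tgt : K
  hsrc : ∀ a ∈ F, a ≤ src
  htgt : ∀ a ∈ F, a ≤ tgt

def CechSimplex1.swap (s : CechSimplex1 K) : CechSimplex1 K :=
  ⟨s.F, s.hne, s.tgt, s.src, s.htgt, s.hsrc⟩

/-- `A^F_o`: the C*-subalgebra of the fibre over `o` generated by the images of the
fibres over the elements of `F`. -/
def CStarNet.fibGen (N : CStarNet.{u, v} K) (F : Set K) (o : K) (hF : ∀ a ∈ F, a ≤ o) :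
    StarSubalgebra ℂ (N.fib o) :=
  (StarAlgebra.adjoin ℂ (⋃ a, ⋃ h : a ∈ F, Set.range (N.incl (hF a h)))).topologicalClosure

theorem CStarNet.mem_fibGen (N : CStarNet.{u, v} K) {F : Set K} {o : K}
    (hF : ∀ a ∈ F, a ≤ o) {a : K} (ha : a ∈ F) (x : N.fib a) :
    N.incl (hF a ha) x ∈ N.fibGen F o hF :=
  StarSubalgebra.le_topologicalClosure _
    (StarAlgebra.subset_adjoin ℂ _
      (Set.mem_iUnion.2 ⟨a, Set.mem_iUnion.2 ⟨ha, Set.mem_range_self x⟩⟩))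

/-- A generalized Čech cocycle of the net `N` defined over the collection `D` of
1-simplices of `Σ°_*(K)`. -/
structure CechCocycle (N : CStarNet.{u, v} K) (D : Set (CechSimplex1 K)) where
  zeta : ∀ s ∈ D, (N.fibGen s.F s.src s.hsrc ≃⋆ₐ[ℂ] N.fibGen s.F s.tgt s.htgt)
  compat : ∀ (s : CechSimplex1 K) (hs : s ∈ D) ⦃a : K⦄ (ha : a ∈ s.F) (x : N.fib a),
      (zeta s hs ⟨N.incl (s.hsrc a ha) x, N.mem_fibGen s.hsrc ha x⟩ : N.fib s.tgt)
        = N.incl (s.htgt a ha) x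

/-- The domain of the Čech cocycle of a net: the union of all the domains over which
a Čech cocycle of the net exists. -/
def CechDomain (N : CStarNet.{u, v} K) : Set (CechSimplex1 K) :=
  {s | ∃ D : Set (CechSimplex1 K), Nonempty (CechCocycle N D) ∧ s ∈ D}


/-- A representation of a C*-net bundle and a covariant representation of its holonomy
dynamical system correspond to each other. -/
def MatchesCov {N : CStarNet.{u, v} K} {hN : IsCStarNetBundle N} {o : K}
    (R : NetRep.{u, v, w} N) (C : CovRep.{u, v, w'} N hN o) : Prop :=
  ∃ W : R.H o ≃ₗᵢ[ℂ] C.H,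
    (∀ (x : N.fib o) (v : R.H o), W (R.rep o x v) = C.eta x (W v)) ∧
    (∀ (p : SPath K o o) (v : R.H o), W (R.Upath p v) = C.V p (W v))



/-! ### Auxiliary results for Statement 8 -/

section Statement8Aux

open scoped ComplexOrder

/-- A norm-one unital functional is real on selfadjoint elements. -/
theorem im_zero_of_selfAdjoint {A : Type v''} [CStarAlgebra A] [Nontrivial A] (g : A →ₗ[ℂ] ℂ)
    (hb : ∀ a, ‖g a‖ ≤ ‖a‖) (h1 : g 1 = 1) {a : A} (ha : IsSelfAdjoint a) :
    (g a).im = 0 := by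
  have key : ∀ t : ℝ, (g a).re ^ 2 + ((g a).im + t) ^ 2 ≤ ‖a‖ ^ 2 + t ^ 2 := by
    intro t
    set c : ℂ := (t : ℂ) * Complex.I with hc
    have hy : g (a + c • 1) = g a + c := by
      rw [map_add, map_smul, h1, smul_eq_mul, mul_one]
    have hstarc : star c = -c := by simp [hc, Complex.ext_iff]
    have hsy : star (a + c • 1) = a - c • 1 := by
      rw [star_add, star_smul, star_one, ha.star_eq, hstarc, neg_smul, ← sub_eq_add_neg]
    have hcc : c * c = -((t:ℂ)^2) := by
      rw [hc]; ring_nf; rw [Complex.I_sq]; ring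
    have hmul : star (a + c • 1) * (a + c • 1) = a * a + ((t : ℂ)^2) • 1 := by
      rw [hsy, sub_mul, mul_add, mul_add]
      simp only [mul_smul_comm, smul_mul_assoc, mul_one, one_mul, smul_smul, hcc]
      module
    have hnorm : ‖a + c • 1‖ ^ 2 ≤ ‖a‖ ^ 2 + t ^ 2 := by
      have h2 : ‖a + c • 1‖ ^ 2 = ‖star (a + c • 1) * (a + c • 1)‖ := by
        rw [CStarRing.norm_star_mul_self, sq]
      rw [h2, hmul]
      calc ‖a * a + ((t : ℂ)^2) • 1‖ ≤ ‖a * a‖ + ‖((t : ℂ)^2) • (1:A)‖ := norm_add_le _ _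
        _ ≤ ‖a‖ * ‖a‖ + ‖((t : ℂ)^2)‖ * ‖(1:A)‖ := by
            gcongr
            · exact norm_mul_le a a
            · exact (norm_smul _ _).le
        _ = ‖a‖ ^ 2 + t ^ 2 := by
            rw [CStarRing.norm_one, mul_one, norm_pow, Complex.norm_real,
              Real.norm_eq_abs, sq_abs]; ring
    have hgy : ‖g (a + c • 1)‖ ^ 2 = (g a).re ^ 2 + ((g a).im + t) ^ 2 := by
      rw [hy, Complex.sq_norm, Complex.normSq_apply]
      simp [hc]
      ring
    calc (g a).re ^ 2 + ((g a).im + t) ^ 2 = ‖g (a + c • 1)‖ ^ 2 := hgy.symm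
      _ ≤ ‖a + c • 1‖ ^ 2 := by gcongr; exact hb _
      _ ≤ ‖a‖ ^ 2 + t ^ 2 := hnorm
  by_contra him
  have h2 : ∀ t : ℝ, 2 * (g a).im * t ≤ ‖a‖ ^ 2 := fun t => by nlinarith [key t]
  have h3 := h2 ((‖a‖^2 + 1) / (2 * (g a).im))
  rw [mul_div_cancel₀] at h3
  · linarith
  · intro h0
    apply him
    linarith

/-- A norm-one unital functional on a C*-algebra is positive. -/
theorem pos_of_norm_le {A : Type v''} [CStarAlgebra A] [Nontrivial A] (g : A →ₗ[ℂ] ℂ)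
    (hb : ∀ a, ‖g a‖ ≤ ‖a‖) (h1 : g 1 = 1) (b : A) : 0 ≤ g (star b * b) := by
  set a := star b * b with hadef
  have ha : IsSelfAdjoint a := IsSelfAdjoint.star_mul_self b
  have him : (g a).im = 0 := im_zero_of_selfAdjoint g hb h1 ha
  letI := CStarAlgebra.spectralOrder A
  haveI := CStarAlgebra.spectralOrderedRing A
  have h0a : (0:A) ≤ a := star_mul_self_nonneg b
  have hle : a ≤ algebraMap ℝ A ‖a‖ := ha.le_algebraMap_norm_self
  set cl := algebraMap ℝ A ‖a‖ - a with hcl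
  have hc0 : (0:A) ≤ cl := sub_nonneg.mpr hle
  have hcle : cl ≤ algebraMap ℝ A ‖a‖ := sub_le_self _ h0a
  have hnc : ‖cl‖ ≤ ‖a‖ := by
    calc ‖cl‖ ≤ ‖algebraMap ℝ A ‖a‖‖ := CStarAlgebra.norm_le_norm_of_nonneg_of_le hc0 hcle
      _ = ‖a‖ := by rw [norm_algebraMap']; exact norm_norm a
  have hgc : g cl = (‖a‖ : ℂ) - g a := by
    have h5 : algebraMap ℝ A ‖a‖ = ((‖a‖ : ℂ)) • (1:A) := by
      rw [IsScalarTower.algebraMap_apply ℝ ℂ A, Algebra.algebraMap_eq_smul_one]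
      norm_num
    rw [hcl, map_sub, h5, map_smul, h1, smul_eq_mul, mul_one]
  have hbc : ‖g cl‖ ≤ ‖a‖ := (hb cl).trans hnc
  rw [hgc] at hbc
  have hre : ((‖a‖ : ℂ) - g a).im = 0 := by simp [him]
  have habs : |‖a‖ - (g a).re| ≤ ‖a‖ := by
    have h2 : ((‖a‖ : ℂ) - g a).re = ‖a‖ - (g a).re := by simp
    calc |‖a‖ - (g a).re| = ‖((‖a‖ : ℂ) - g a)‖ := by
          rw [Complex.norm_def, Complex.normSq_apply, h2, hre]
          rw [mul_zero, add_zero, Real.sqrt_mul_self_eq_abs]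
      _ ≤ ‖a‖ := hbc
  rw [Complex.le_def]
  constructor
  · have h6 := abs_le.mp habs
    simpa using by linarith [h6.2]
  · simp [him]

/-- Every nontrivial unital C*-algebra admits a bounded state. -/
theorem exists_bounded_state (A : Type v'') [CStarAlgebra A] [Nontrivial A] :
    ∃ f : A →ₗ[ℂ] ℂ, f 1 = 1 ∧ (∀ a, 0 ≤ f (star a * a)) ∧ ∀ a, ‖f a‖ ≤ ‖a‖ := by
  have hinj : Function.Injective (LinearMap.toSpanSingleton ℂ A 1) := by
    intro x y hxy
    simp only [LinearMap.toSpanSingleton_apply] at hxy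
    have h : (x - y) • (1:A) = 0 := by rw [sub_smul, hxy, sub_self]
    rcases smul_eq_zero.mp h with h | h
    · exact sub_eq_zero.mp h
    · exact absurd h one_ne_zero
  set p := LinearMap.range (LinearMap.toSpanSingleton ℂ A 1) with hp
  let e : ℂ ≃ₗ[ℂ] p := LinearEquiv.ofInjective _ hinj
  haveI : FiniteDimensional ℂ p := Module.Finite.equiv e
  have hval : ∀ z : p, (z : A) = (e.symm z) • 1 := by
    intro z
    conv_lhs => rw [← e.apply_symm_apply z]
    rw [LinearEquiv.ofInjective_apply, LinearMap.toSpanSingleton_apply]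
  let f₀L : p →L[ℂ] ℂ := LinearMap.toContinuousLinearMap (e.symm : p →ₗ[ℂ] ℂ)
  have hf₀ : ∀ z : p, ‖f₀L z‖ = ‖z‖ := by
    intro z
    have h4 : ‖(z : A)‖ = ‖e.symm z‖ * ‖(1:A)‖ := by rw [hval z, norm_smul]
    rw [CStarRing.norm_one, mul_one] at h4
    exact h4.symm
  have hf₀n : ‖f₀L‖ ≤ 1 := by
    refine ContinuousLinearMap.opNorm_le_bound _ zero_le_one fun z => ?_
    rw [one_mul, hf₀]
  obtain ⟨gE, hext, hnorm⟩ := exists_extension_norm_eq p f₀L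
  have hb : ∀ a : A, ‖gE a‖ ≤ ‖a‖ := by
    intro a
    calc ‖gE a‖ ≤ ‖gE‖ * ‖a‖ := gE.le_opNorm a
      _ ≤ 1 * ‖a‖ := by rw [hnorm]; exact mul_le_mul_of_nonneg_right hf₀n (norm_nonneg a)
      _ = ‖a‖ := one_mul _
  have one_mem : (1:A) ∈ p := ⟨1, by simp [LinearMap.toSpanSingleton_apply]⟩
  have h1 : gE 1 = 1 := by
    have h2 := hext ⟨1, one_mem⟩
    have h3 : e 1 = ⟨1, one_mem⟩ := by
      apply Subtype.ext
      rw [LinearEquiv.ofInjective_apply, LinearMap.toSpanSingleton_apply, one_smul]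
    have h4 : f₀L ⟨1, one_mem⟩ = 1 := by
      show (e.symm : p →ₗ[ℂ] ℂ) ⟨1, one_mem⟩ = 1
      simp only [LinearEquiv.coe_coe]
      rw [← h3, e.symm_apply_apply]
    rw [h4] at h2
    exact h2
  exact ⟨(gE : A →ₗ[ℂ] ℂ), h1, fun a => pos_of_norm_le (gE : A →ₗ[ℂ] ℂ) hb h1 a, hb⟩

variable {K : Type u} [PartialOrder K]

theorem CStarNet.incl_refl_apply (N : CStarNet.{u, v} K) {o : K} (x : N.fib o) :
    N.incl (le_refl o) x = x :=
  N.incl_injective (le_refl o) (N.incl_comp (le_refl o) (le_refl o) x)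

theorem CStarNet.fibCast_apply_eq_incl (N : CStarNet.{u, v} K) {a b : K} (h : a = b)
    (x : N.fib a) : N.fibCast h x = N.incl h.le x := by
  cases h
  rw [N.incl_refl_apply]
  rfl

variable {N : CStarNet.{u, v} K}

theorem holEquiv_apply (hN : IsCStarNetBundle N) {a o : K} (h : a ≤ o) (x : N.fib a) :
    N.holEquiv hN h x = N.incl h x := rfl

theorem incl_holEquiv_symm (hN : IsCStarNetBundle N) {a o : K} (h : a ≤ o) (z : N.fib o) :
    N.incl h ((N.holEquiv hN h).symm z) = z := by
  conv_rhs => rw [← (N.holEquiv hN h).apply_symm_apply z]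
  rfl

theorem hol1_eq_iff (hN : IsCStarNetBundle N) {s : Simplex1 K} {x : N.fib s.d1}
    {y : N.fib s.d0} :
    N.hol1 hN s x = y ↔ N.incl s.le1 x = N.incl s.le0 y := by
  constructor
  · rintro rfl
    show N.incl s.le1 x
        = N.incl s.le0 ((N.holEquiv hN s.le0).symm (N.holEquiv hN s.le1 x))
    rw [incl_holEquiv_symm hN]
    rfl
  · intro h
    show (N.holEquiv hN s.le0).symm (N.holEquiv hN s.le1 x) = y
    apply EquivLike.injective (N.holEquiv hN s.le0)
    rw [(N.holEquiv hN s.le0).apply_symm_apply]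
    exact h

theorem hol1_lift (hN : IsCStarNetBundle N) {s : Simplex1 K} {t : K} (hst : s.supp ≤ t)
    (x : N.fib s.d1) :
    N.incl (s.le0.trans hst) (N.hol1 hN s x) = N.incl (s.le1.trans hst) x := by
  have h := (hol1_eq_iff hN (x := x) (y := N.hol1 hN s x)).mp rfl
  calc N.incl (s.le0.trans hst) (N.hol1 hN s x)
      = N.incl hst (N.incl s.le0 (N.hol1 hN s x)) := (N.incl_comp _ _ _).symm
    _ = N.incl hst (N.incl s.le1 x) := by rw [← h]
    _ = N.incl (s.le1.trans hst) x := N.incl_comp _ _ _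

theorem holPath_comp_apply (hN : IsCStarNetBundle N) {a b c : K} (p : SPath K a b)
    (q : SPath K b c) (x : N.fib a) :
    N.holPath hN (p.comp q) x = N.holPath hN q (N.holPath hN p x) := by
  induction q with
  | nil => rfl
  | cons q s h1 h0 ih =>
      show (N.fibCast h0) ((N.hol1 hN s) ((N.fibCast h1.symm) (N.holPath hN (p.comp q) x)))
        = (N.fibCast h0) ((N.hol1 hN s) ((N.fibCast h1.symm) (N.holPath hN q (N.holPath hN p x))))
      rw [ih]

theorem holPath_single_apply (hN : IsCStarNetBundle N) {a b : K} (s : Simplex1 K)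
    (h1 : s.d1 = a) (h0 : s.d0 = b) (x : N.fib a) :
    N.holPath hN (SPath.single s h1 h0) x
      = N.incl h0.le (N.hol1 hN s (N.incl h1.ge x)) := by
  show (N.fibCast h0) ((N.hol1 hN s) ((N.fibCast h1.symm) x))
      = N.incl h0.le (N.hol1 hN s (N.incl h1.ge x))
  rw [N.fibCast_apply_eq_incl, N.fibCast_apply_eq_incl]

theorem hol1_triangle (hN : IsCStarNetBundle N) (c : Simplex2 K) (x : N.fib c.d2.d1) :
    N.hol1 hN c.d0 (N.incl c.h10.ge (N.hol1 hN c.d2 x))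
      = N.incl c.h00.ge (N.hol1 hN c.d1 (N.incl c.h11.ge x)) := by
  apply N.incl_injective (c.d0.le0.trans c.le0)
  calc N.incl (c.d0.le0.trans c.le0) (N.hol1 hN c.d0 (N.incl c.h10.ge (N.hol1 hN c.d2 x)))
      = N.incl (c.d0.le1.trans c.le0) (N.incl c.h10.ge (N.hol1 hN c.d2 x)) :=
        hol1_lift hN c.le0 _
    _ = N.incl (c.h10.ge.trans (c.d0.le1.trans c.le0)) (N.hol1 hN c.d2 x) := N.incl_comp _ _ _
    _ = N.incl (c.d2.le0.trans c.le2) (N.hol1 hN c.d2 x) := rfl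
    _ = N.incl (c.d2.le1.trans c.le2) x := hol1_lift hN c.le2 x
    _ = N.incl (c.h11.ge.trans (c.d1.le1.trans c.le1)) x := rfl
    _ = N.incl (c.d1.le1.trans c.le1) (N.incl c.h11.ge x) := (N.incl_comp _ _ _).symm
    _ = N.incl (c.d1.le0.trans c.le1) (N.hol1 hN c.d1 (N.incl c.h11.ge x)) :=
        (hol1_lift hN c.le1 _).symm
    _ = N.incl (c.h00.ge.trans (c.d0.le0.trans c.le0))
          (N.hol1 hN c.d1 (N.incl c.h11.ge x)) := rfl
    _ = N.incl (c.d0.le0.trans c.le0)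
          (N.incl c.h00.ge (N.hol1 hN c.d1 (N.incl c.h11.ge x))) := (N.incl_comp _ _ _).symm

/-- Holonomy along paths only depends on the homotopy class. -/
theorem holPath_homotopic (hN : IsCStarNetBundle N) {a b : K} {p q : SPath K a b}
    (h : SPath.Homotopic p q) : ∀ x, N.holPath hN p x = N.holPath hN q x := by
  induction h with
  | refl p => intro x; rfl
  | symm _ ih => intro x; exact (ih x).symm
  | trans _ _ ih1 ih2 => intro x; exact (ih1 x).trans (ih2 x)
  | comp_congr _ _ ih1 ih2 =>
      intro x
      rw [holPath_comp_apply hN, holPath_comp_apply hN, ih1, ih2]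
  | degen s h0 h1 hs =>
      intro x
      show x = N.holPath hN (SPath.single s h1 h0) x
      rw [holPath_single_apply hN]
      apply N.incl_injective hs.ge
      rw [N.incl_comp]
      have hchar := (hol1_eq_iff hN (x := N.incl h1.ge x)
        (y := N.hol1 hN s (N.incl h1.ge x))).mp rfl
      rw [N.incl_comp] at hchar
      exact hchar
  | triangle c h1 h0 =>
      intro x
      rw [holPath_comp_apply hN, holPath_single_apply hN, holPath_single_apply hN,
        holPath_single_apply hN]
      have hmid : N.incl c.h10.ge (N.incl (rfl : c.d2.d0 = c.d2.d0).le
          (N.hol1 hN c.d2 (N.incl h1.ge x)))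
          = N.incl c.h10.ge (N.hol1 hN c.d2 (N.incl h1.ge x)) := by
        rw [N.incl_comp]
      rw [hmid, hol1_triangle hN c]
      rw [N.incl_comp]
      have hx : N.incl c.h11.ge (N.incl h1.ge x)
          = N.incl ((c.h11.trans h1).symm.le) x := N.incl_comp _ _ _
      rw [hx]

/-- The reverse path implements the inverse holonomy. -/
theorem holPath_reverse_apply (hN : IsCStarNetBundle N) {a b : K} (p : SPath K a b)
    (w : N.fib b) : N.holPath hN p.reverse w = (N.holPath hN p).symm w := by
  apply EquivLike.injective (N.holPath hN p)
  rw [(N.holPath hN p).apply_symm_apply, ← holPath_comp_apply hN,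
    holPath_homotopic hN (SPath.reverse_comp_self p)]
  rfl

/-- Holonomy of the nerve path of an inclusion is the inclusion. -/
theorem holPath_nervePath_apply (hN : IsCStarNetBundle N) {a b : K} (h : a ≤ b)
    (x : N.fib a) : N.holPath hN (SPath.nervePath h) x = N.incl h x := by
  rw [SPath.nervePath, holPath_single_apply hN, N.incl_refl_apply, N.incl_refl_apply]
  apply (hol1_eq_iff hN).mpr
  show N.incl h x = N.incl (le_refl b) (N.incl h x)
  rw [N.incl_refl_apply]

/-- Averaging a state over the amenable fundamental group produces a
holonomy-invariant state. -/
theorem exists_invariant_state {o : K} (hN : IsCStarNetBundle N)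
    [Nontrivial (N.fib o)] (m : RightInvariantMean (Pi1 K o)) :
    ∃ ψ : N.fib o →ₗ[ℂ] ℂ, ψ 1 = 1 ∧ (∀ a, 0 ≤ ψ (star a * a)) ∧
      ∀ (L : SPath K o o) (x : N.fib o), ψ (N.holPath hN L x) = ψ x := by
  obtain ⟨φ, hφ1, hφpos, hφb⟩ := exists_bounded_state (N.fib o)
  let hol : Pi1 K o → (N.fib o ≃⋆ₐ[ℂ] N.fib o) :=
    Quotient.lift (N.holPath hN) (fun p q h => StarAlgEquiv.ext (holPath_homotopic hN h))
  have holmk : ∀ p : SPath K o o, hol (Pi1.mk p) = N.holPath hN p := fun p => rfl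
  have hnorm : ∀ (g : Pi1 K o) (x : N.fib o), ‖(hol g) x‖ = ‖x‖ := fun g x =>
    NonUnitalStarAlgHom.norm_map (hol g) (EquivLike.injective _) x
  have hbound : ∀ (x : N.fib o) (g : Pi1 K o),
      |(φ ((hol g) x)).re| ≤ ‖x‖ ∧ |(φ ((hol g) x)).im| ≤ ‖x‖ := by
    intro x g
    have hb : ‖φ ((hol g) x)‖ ≤ ‖x‖ := by rw [← hnorm g x]; exact hφb _
    exact ⟨(Complex.abs_re_le_norm _).trans hb,
      (Complex.abs_im_le_norm _).trans hb⟩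
  let fRe : N.fib o → BddFuns (Pi1 K o) := fun x =>
    ⟨fun g => (φ ((hol g) x)).re, ⟨‖x‖, fun g => (hbound x g).1⟩⟩
  let fIm : N.fib o → BddFuns (Pi1 K o) := fun x =>
    ⟨fun g => (φ ((hol g) x)).im, ⟨‖x‖, fun g => (hbound x g).2⟩⟩
  have hfRe_add : ∀ x y, fRe (x + y) = fRe x + fRe y := by
    intro x y; apply Subtype.ext; funext g
    show (φ ((hol g) (x + y))).re = (φ ((hol g) x)).re + (φ ((hol g) y)).re
    rw [map_add, map_add, Complex.add_re]
  have hfIm_add : ∀ x y, fIm (x + y) = fIm x + fIm y := by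
    intro x y; apply Subtype.ext; funext g
    show (φ ((hol g) (x + y))).im = (φ ((hol g) x)).im + (φ ((hol g) y)).im
    rw [map_add, map_add, Complex.add_im]
  have hfRe_smul : ∀ (c : ℂ) x, fRe (c • x) = c.re • fRe x - c.im • fIm x := by
    intro c x; apply Subtype.ext; funext g
    show (φ ((hol g) (c • x))).re = c.re * (φ ((hol g) x)).re - c.im * (φ ((hol g) x)).im
    rw [map_smul, map_smul]
    exact Complex.mul_re c _
  have hfIm_smul : ∀ (c : ℂ) x, fIm (c • x) = c.re • fIm x + c.im • fRe x := by
    intro c x; apply Subtype.ext; funext g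
    show (φ ((hol g) (c • x))).im = c.re * (φ ((hol g) x)).im + c.im * (φ ((hol g) x)).re
    rw [map_smul, map_smul]
    exact Complex.mul_im c _
  let ψ : N.fib o →ₗ[ℂ] ℂ :=
    { toFun := fun x => ⟨m.mean (fRe x), m.mean (fIm x)⟩
      map_add' := fun x y => by
        apply Complex.ext
        · show m.mean (fRe (x + y)) = m.mean (fRe x) + m.mean (fRe y)
          rw [hfRe_add, map_add]
        · show m.mean (fIm (x + y)) = m.mean (fIm x) + m.mean (fIm y)
          rw [hfIm_add, map_add]
      map_smul' := fun c x => by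
        apply Complex.ext
        · show m.mean (fRe (c • x)) = (c * ⟨m.mean (fRe x), m.mean (fIm x)⟩).re
          rw [hfRe_smul, map_sub, map_smul, map_smul, Complex.mul_re]
          rfl
        · show m.mean (fIm (c • x)) = (c * ⟨m.mean (fRe x), m.mean (fIm x)⟩).im
          rw [hfIm_smul, map_add, map_smul, map_smul, Complex.mul_im]
          rfl }
  have hψ1 : ψ 1 = 1 := by
    have hRe : fRe 1 = BddFuns.const (Pi1 K o) 1 := by
      apply Subtype.ext; funext g
      show (φ ((hol g) 1)).re = 1
      rw [map_one, hφ1]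
      rfl
    have hIm : fIm 1 = 0 := by
      apply Subtype.ext; funext g
      show (φ ((hol g) 1)).im = 0
      rw [map_one, hφ1]
      rfl
    show (⟨m.mean (fRe 1), m.mean (fIm 1)⟩ : ℂ) = 1
    rw [hRe, hIm, m.normalized, map_zero]
    rfl
  have hψpos : ∀ a, 0 ≤ ψ (star a * a) := by
    intro a
    have hpt : ∀ g : Pi1 K o, 0 ≤ φ ((hol g) (star a * a)) := by
      intro g
      rw [map_mul, map_star]
      exact hφpos _
    rw [Complex.le_def]
    constructor
    · show (0:ℂ).re ≤ m.mean (fRe (star a * a))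
      have := m.nonneg (fRe (star a * a)) (fun g => by
        have h := (Complex.le_def.mp (hpt g)).1
        exact h)
      simpa using this
    · show (0:ℂ).im = m.mean (fIm (star a * a))
      have hIm : fIm (star a * a) = 0 := by
        apply Subtype.ext; funext g
        have h := (Complex.le_def.mp (hpt g)).2
        exact h.symm
      rw [hIm, map_zero]
      rfl
  have hkey : ∀ (L : SPath K o o) (g : Pi1 K o) (x : N.fib o),
      (hol g) (N.holPath hN L x) = (hol (g * Pi1.mk L)) x := by
    intro L g x
    refine Quotient.inductionOn g ?_
    intro p
    show N.holPath hN p (N.holPath hN L x) = N.holPath hN (L.comp p) x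
    exact (holPath_comp_apply hN L p x).symm
  refine ⟨ψ, hψ1, hψpos, ?_⟩
  intro L x
  have hRe : fRe (N.holPath hN L x) = BddFuns.rtrans (fRe x) (Pi1.mk L) := by
    apply Subtype.ext; funext g
    show (φ ((hol g) (N.holPath hN L x))).re = (φ ((hol (g * Pi1.mk L)) x)).re
    rw [hkey]
  have hIm : fIm (N.holPath hN L x) = BddFuns.rtrans (fIm x) (Pi1.mk L) := by
    apply Subtype.ext; funext g
    show (φ ((hol g) (N.holPath hN L x))).im = (φ ((hol (g * Pi1.mk L)) x)).im
    rw [hkey]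
  show (⟨m.mean (fRe (N.holPath hN L x)), m.mean (fIm (N.holPath hN L x))⟩ : ℂ)
      = ⟨m.mean (fRe x), m.mean (fIm x)⟩
  rw [hRe, hIm, m.rightInv, m.rightInv]

end Statement8Aux

/-- if the fundamental group of the poset is amenable then every
nondegenerate net of C*-algebras over it has a state. -/
theorem statement_8 {K : Type u} [PartialOrder K]
    (hconn : ∀ a b : K, Nonempty (SPath K a b)) (o : K)
    (ham : IsAmenable (Pi1 K o))
    (N : CStarNet.{u, v} K) (NB : CStarNet.{u, max u v} K)
    (ε : ∀ o', N.fib o' →⋆ₐ[ℂ] NB.fib o') (henv : IsEnvelope N NB ε)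
    (hnd : IsNondegenerate NB) :
    Nonempty (NetState N) := by
  classical
  obtain ⟨hN, hε, -⟩ := henv
  obtain ⟨m⟩ := ham
  haveI : Nontrivial (NB.fib o) := hnd o
  obtain ⟨ψ, hψ1, hψpos, hψinv⟩ := exists_invariant_state (o := o) hN m
  let pth : ∀ a : K, SPath K o a := fun a => (hconn o a).some
  let E : ∀ a : K, NB.fib o ≃⋆ₐ[ℂ] NB.fib a := fun a => NB.holPath hN (pth a)
  let linA : ∀ a : K, NB.fib a →ₗ[ℂ] ℂ := fun a =>
    { toFun := fun x => ψ ((E a).symm x)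
      map_add' := fun x y => by
        show ψ ((E a).symm (x + y)) = ψ ((E a).symm x) + ψ ((E a).symm y)
        rw [map_add, map_add]
      map_smul' := fun c x => by
        show ψ ((E a).symm (c • x)) = c • ψ ((E a).symm x)
        rw [map_smul, map_smul] }
  let sta : ∀ a : K, CStarAlgState (NB.fib a) := fun a =>
    { lin := linA a
      map_one := by
        show ψ ((E a).symm 1) = 1
        rw [map_one, hψ1]
      pos := fun x => by
        show 0 ≤ ψ ((E a).symm (star x * x))
        rw [map_mul, map_star]
        exact hψpos _ }
  have hcompat : ∀ ⦃a b : K⦄ (h : a ≤ b) (x : NB.fib a),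
      (sta b).lin (NB.incl h x) = (sta a).lin x := by
    intro a b h x
    show ψ ((E b).symm (NB.incl h x)) = ψ ((E a).symm x)
    set z := (E a).symm x with hz
    have hx : NB.holPath hN (pth a) z = x := (E a).apply_symm_apply x
    have hL : NB.holPath hN (((pth a).comp (SPath.nervePath h)).comp (pth b).reverse) z
        = (E b).symm (NB.incl h x) := by
      rw [holPath_comp_apply hN, holPath_comp_apply hN, hx,
        holPath_nervePath_apply hN, holPath_reverse_apply hN]
    rw [← hL, hψinv]
  refine ⟨⟨fun a =>
    { lin :=
        { toFun := fun x => (sta a).lin (ε a x)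
          map_add' := fun x y => by
            show (sta a).lin (ε a (x + y)) = (sta a).lin (ε a x) + (sta a).lin (ε a y)
            rw [map_add, map_add]
          map_smul' := fun c x => by
            show (sta a).lin (ε a (c • x)) = c • (sta a).lin (ε a x)
            rw [map_smul, map_smul] }
      map_one := by
        show (sta a).lin (ε a 1) = 1
        rw [map_one]
        exact (sta a).map_one
      pos := fun x => by
        show 0 ≤ (sta a).lin (ε a (star x * x))
        rw [map_mul, map_star]
        exact (sta a).pos (ε a x) }, ?_⟩⟩
  intro a b h x
  show (sta b).lin (ε b (N.incl h x)) = (sta a).lin (ε a x)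
  rw [hε h x]
  exact hcompat h (ε a x)


end AQFT
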